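/- In the active sensing setup, suppose the waveform matrix has rank one, S = u·v^H for some nonzero u ∈ ℂ^T and nonzero v ∈ ℂ^{N_tx}. Then krank(B) = N_rx if and only if both krank(A_rx) = N_rx and (v^H·A_tx)_i ≠ 0 for every i ∈ {1, …, V}, where B = (S·A_tx) ⊙ A_rx. -/

import Mathlib

/-- The Kruskal rank of a complex matrix `M`: the largest integer `r` such that
every set of `r` columns of `M` is linearly independent. -/
noncomputable def krank {m n : Type*} [Fintype m] [Fintype n] (M : Matrix m n ℂ) : ℕ :=
  sSup {r : ℕ | r ≤ Fintype.card n ∧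
    ∀ s : Finset n, s.card = r → LinearIndependent ℂ (fun j : s => M.transpose (j : n))}

/-- The Khatri-Rao (columnwise Kronecker) product. -/
def khatriRao {p q V : Type*} (A : Matrix p V ℂ) (B : Matrix q V ℂ) :
    Matrix (p × q) V ℂ :=
  Matrix.of fun nm i => A nm.1 i * B nm.2 i

/-- Restricting an independent family of columns to a subset keeps it independent. -/
lemma li_cols_subset {m n : Type*} [Fintype m] [Fintype n] (M : Matrix m n ℂ)
    {s t : Finset n} (hst : s ⊆ t)
    (h : LinearIndependent ℂ (fun j : t => M.transpose (j : n))) :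
    LinearIndependent ℂ (fun j : s => M.transpose (j : n)) :=
  h.comp (fun j : s => (⟨j.1, hst j.2⟩ : t))
    (by intro a b hab; exact Subtype.ext (congrArg (fun x : t => (x : n)) hab))

lemma zero_mem_krankSet {m n : Type*} [Fintype m] [Fintype n] (M : Matrix m n ℂ) :
    (0 : ℕ) ∈ {r : ℕ | r ≤ Fintype.card n ∧
      ∀ s : Finset n, s.card = r →
        LinearIndependent ℂ (fun j : s => M.transpose (j : n))} := by
  refine ⟨Nat.zero_le _, fun s hs => ?_⟩
  rw [Finset.card_eq_zero] at hs
  subst hs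
  exact linearIndependent_empty_type

lemma krankSet_bddAbove {m n : Type*} [Fintype m] [Fintype n] (M : Matrix m n ℂ) :
    BddAbove {r : ℕ | r ≤ Fintype.card n ∧
      ∀ s : Finset n, s.card = r →
        LinearIndependent ℂ (fun j : s => M.transpose (j : n))} :=
  ⟨Fintype.card n, fun _ hr => hr.1⟩

lemma mem_krankSet_of_le {m n : Type*} [Fintype m] [Fintype n] (M : Matrix m n ℂ)
    {r r' : ℕ} (hr' : r' ≤ r)
    (hr : r ∈ {r : ℕ | r ≤ Fintype.card n ∧
      ∀ s : Finset n, s.card = r →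
        LinearIndependent ℂ (fun j : s => M.transpose (j : n))}) :
    r' ∈ {r : ℕ | r ≤ Fintype.card n ∧
      ∀ s : Finset n, s.card = r →
        LinearIndependent ℂ (fun j : s => M.transpose (j : n))} := by
  refine ⟨hr'.trans hr.1, fun s hs => ?_⟩
  obtain ⟨t, hst, -, hts⟩ :=
    Finset.exists_subsuperset_card_eq s.subset_univ (by omega : s.card ≤ r)
      (by simpa using hr.1)
  exact li_cols_subset M hst (hr.2 t hts)

/-- for a rank-one waveform matrix `S = u·vᴴ` (`u ≠ 0`, `v ≠ 0`),
`krank B = N_rx` iff `krank A_rx = N_rx` and every entry of `vᴴ·A_tx` is nonzero. -/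
theorem stmt_7 (Ntx Nrx T V : ℕ)
    (hNtx : 0 < Ntx) (hNrx : 0 < Nrx) (hT : 0 < T) (hV : 0 < V)
    (dtx : Fin Ntx → ℤ) (drx : Fin Nrx → ℤ)
    (hdtx0 : dtx ⟨0, hNtx⟩ = 0) (hdtxMono : StrictMono dtx)
    (hdrx0 : drx ⟨0, hNrx⟩ = 0) (hdrxMono : StrictMono drx)
    (θ : Fin V → ℝ) (hθinj : Function.Injective θ)
    (hθrange : ∀ i, θ i ∈ Set.Ico (-(Real.pi / 2)) (Real.pi / 2))
    (Atx : Matrix (Fin Ntx) (Fin V) ℂ)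
    (hAtx : ∀ n i, Atx n i =
      Complex.exp (Complex.I * Real.pi * (dtx n : ℂ) * (Real.sin (θ i) : ℂ)))
    (Arx : Matrix (Fin Nrx) (Fin V) ℂ)
    (hArx : ∀ m i, Arx m i =
      Complex.exp (Complex.I * Real.pi * (drx m : ℂ) * (Real.sin (θ i) : ℂ)))
    (u : Fin T → ℂ) (hu : u ≠ 0) (v : Fin Ntx → ℂ) (hv : v ≠ 0)
    (S : Matrix (Fin T) (Fin Ntx) ℂ)
    (hS : S = Matrix.vecMulVec u (star v)) :
    krank (khatriRao (S * Atx) Arx) = Nrx ↔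
      krank Arx = Nrx ∧ ∀ i, Matrix.vecMul (star v) Atx i ≠ 0 := by
  classical
  set c : Fin V → ℂ := Matrix.vecMul (star v) Atx with hcdef
  set B : Matrix (Fin T × Fin Nrx) (Fin V) ℂ := khatriRao (S * Atx) Arx with hBdef
  obtain ⟨t0, ht0⟩ : ∃ t, u t ≠ 0 := by
    by_contra h; push_neg at h; exact hu (funext h)
  have hB : ∀ t m i, B (t, m) i = u t * (c i * Arx m i) := by
    intro t m i
    show (S * Atx) t i * Arx m i = _
    rw [hS]
    simp only [Matrix.mul_apply, Matrix.vecMulVec_apply, hcdef, Matrix.vecMul,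
      dotProduct, Pi.star_apply]
    simp only [Finset.sum_mul, Finset.mul_sum]
    exact Finset.sum_congr rfl fun k _ => by ring
  -- the key pointwise characterization of independence of columns of B
  have key : ∀ s : Finset (Fin V),
      LinearIndependent ℂ (fun j : s => B.transpose (j : Fin V)) ↔
      ((∀ i ∈ s, c i ≠ 0) ∧
        LinearIndependent ℂ (fun j : s => Arx.transpose (j : Fin V))) := by
    intro s
    have hsumB : ∀ (g : s → ℂ) (t : Fin T) (m : Fin Nrx),
        (∑ j : s, g j • B.transpose (j : Fin V)) (t, m)
          = u t * ∑ j : s, (g j * c (j : Fin V)) * Arx m (j : Fin V) := by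
      intro g t m
      rw [Finset.sum_apply, Finset.mul_sum]
      refine Finset.sum_congr rfl fun j _ => ?_
      simp only [Pi.smul_apply, smul_eq_mul, Matrix.transpose_apply, hB]
      ring
    have hsumA : ∀ (g : s → ℂ) (m : Fin Nrx),
        (∑ j : s, g j • Arx.transpose (j : Fin V)) m
          = ∑ j : s, g j * Arx m (j : Fin V) := by
      intro g m
      rw [Finset.sum_apply]
      exact Finset.sum_congr rfl fun j _ => by
        simp [Matrix.transpose_apply]
    constructor
    · intro h
      have hcs : ∀ i ∈ s, c i ≠ 0 := by
        intro i hi hci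
        refine h.ne_zero ⟨i, hi⟩ ?_
        funext tm
        obtain ⟨t, m⟩ := tm
        simp [Matrix.transpose_apply, hB, hci]
      refine ⟨hcs, ?_⟩
      rw [Fintype.linearIndependent_iff] at h ⊢
      intro g hg j
      have hg' : ∀ m, ∑ j : s, g j * Arx m (j : Fin V) = 0 := by
        intro m
        rw [← hsumA g m, hg]; rfl
      have h2 : ∑ j : s, (g j / c (j : Fin V)) • B.transpose (j : Fin V) = 0 := by
        funext tm
        obtain ⟨t, m⟩ := tm
        rw [show ((0 : Fin T × Fin Nrx → ℂ) (t, m)) = 0 from rfl]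
        rw [hsumB]
        have : ∑ j : s, (g j / c (j : Fin V) * c (j : Fin V)) * Arx m (j : Fin V)
            = ∑ j : s, g j * Arx m (j : Fin V) :=
          Finset.sum_congr rfl fun j _ => by
            rw [div_mul_cancel₀ _ (hcs j j.2)]
        rw [this, hg' m, mul_zero]
      have := h (fun j => g j / c (j : Fin V)) h2 j
      rcases div_eq_zero_iff.mp this with h' | h'
      · exact h'
      · exact absurd h' (hcs j j.2)
    · rintro ⟨hcs, h⟩
      rw [Fintype.linearIndependent_iff] at h ⊢
      intro g hg j
      have hg' : ∀ m, ∑ j : s, (g j * c (j : Fin V)) * Arx m (j : Fin V) = 0 := by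
        intro m
        have := congrFun hg (t0, m)
        rw [hsumB] at this
        rcases mul_eq_zero.mp this with h' | h'
        · exact absurd h' ht0
        · exact h'
      have h2 : ∑ j : s, (g j * c (j : Fin V)) • Arx.transpose (j : Fin V) = 0 := by
        funext m
        rw [show ((0 : Fin Nrx → ℂ) m) = 0 from rfl, hsumA, hg' m]
      have := h (fun j => g j * c (j : Fin V)) h2 j
      rcases mul_eq_zero.mp this with h' | h'
      · exact h'
      · exact absurd h' (hcs j j.2)
  -- an element of the krank set of Arx is at most Nrx
  have hubA : ∀ r ∈ {r : ℕ | r ≤ Fintype.card (Fin V) ∧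
      ∀ s : Finset (Fin V), s.card = r →
        LinearIndependent ℂ (fun j : s => Arx.transpose (j : Fin V))}, r ≤ Nrx := by
    rintro r ⟨h1, h2⟩
    obtain ⟨s, -, hs⟩ := Finset.exists_subset_card_eq
      (show r ≤ (Finset.univ : Finset (Fin V)).card by simpa using h1)
    have hli := h2 s hs
    have := hli.fintype_card_le_finrank
    simpa [Module.finrank_fintype_fun_eq_card, Fintype.card_coe, hs] using this
  constructor
  · intro hkr
    have hmem : Nrx ∈ {r : ℕ | r ≤ Fintype.card (Fin V) ∧
        ∀ s : Finset (Fin V), s.card = r →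
          LinearIndependent ℂ (fun j : s => B.transpose (j : Fin V))} := by
      have hne : Set.Nonempty {r : ℕ | r ≤ Fintype.card (Fin V) ∧
          ∀ s : Finset (Fin V), s.card = r →
            LinearIndependent ℂ (fun j : s => B.transpose (j : Fin V))} :=
        ⟨0, zero_mem_krankSet B⟩
      have := Nat.sSup_mem hne (krankSet_bddAbove B)
      rwa [show sSup {r : ℕ | r ≤ Fintype.card (Fin V) ∧
          ∀ s : Finset (Fin V), s.card = r →
            LinearIndependent ℂ (fun j : s => B.transpose (j : Fin V))} = Nrx from hkr]
        at this
    have hNV : Nrx ≤ V := by simpa using hmem.1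
    have hcne : ∀ i, c i ≠ 0 := by
      intro i
      obtain ⟨s, his, -, hcard⟩ :=
        Finset.exists_subsuperset_card_eq (n := Nrx) ({i} : Finset (Fin V)).subset_univ
          (by rw [Finset.card_singleton]; exact hNrx) (by simpa using hNV)
      have hli := hmem.2 s hcard
      exact ((key s).mp hli).1 i (his (Finset.mem_singleton_self i))
    refine ⟨?_, hcne⟩
    have hmemA : Nrx ∈ {r : ℕ | r ≤ Fintype.card (Fin V) ∧
        ∀ s : Finset (Fin V), s.card = r →
          LinearIndependent ℂ (fun j : s => Arx.transpose (j : Fin V))} :=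
      ⟨by simpa using hNV, fun s hs => ((key s).mp (hmem.2 s hs)).2⟩
    exact le_antisymm (csSup_le ⟨Nrx, hmemA⟩ hubA)
      (le_csSup (krankSet_bddAbove Arx) hmemA)
  · rintro ⟨hA, hcne⟩
    have hset : {r : ℕ | r ≤ Fintype.card (Fin V) ∧
        ∀ s : Finset (Fin V), s.card = r →
          LinearIndependent ℂ (fun j : s => B.transpose (j : Fin V))}
        = {r : ℕ | r ≤ Fintype.card (Fin V) ∧
        ∀ s : Finset (Fin V), s.card = r →
          LinearIndependent ℂ (fun j : s => Arx.transpose (j : Fin V))} := by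
      ext r
      constructor
      · rintro ⟨h1, h2⟩
        exact ⟨h1, fun s hs => ((key s).mp (h2 s hs)).2⟩
      · rintro ⟨h1, h2⟩
        exact ⟨h1, fun s hs => (key s).mpr ⟨fun i _ => hcne i, h2 s hs⟩⟩
    show sSup _ = Nrx
    rw [hset]
    exact hA
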